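/- If X is a real-valued random variable with distribution function F, and V is uniformly distributed on [0,1] and independent of X, then the random variable U := F(X-) + V·(F(X) − F(X-)) is uniformly distributed on [0,1]. -/

import Mathlib

open MeasureTheory ProbabilityTheory Set Filter Topology

lemma uniform_slice (μ : Measure ℝ) [IsProbabilityMeasure μ] (F Fm : ℝ → ℝ)
    (hF : ∀ x, F x = (μ (Iic x)).toReal) (hFm : ∀ x, Fm x = (μ (Iio x)).toReal)
    {u : ℝ} (hu0 : 0 ≤ u) (hu1 : u < 1) :
    ∫⁻ x, (volume.restrict (Icc (0:ℝ) 1)) {v | Fm x + v * (F x - Fm x) ≤ u} ∂μ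
      = ENNReal.ofReal u := by
  have hne : ∀ s : Set ℝ, μ s ≠ ⊤ := fun s => measure_ne_top μ s
  have hle : ∀ x, Fm x ≤ F x := fun x => by
    rw [hF, hFm]; exact ENNReal.toReal_mono (hne _) (measure_mono Iio_subset_Iic_self)
  have hFm0 : ∀ x, 0 ≤ Fm x := fun x => by rw [hFm]; exact ENNReal.toReal_nonneg
  have hmonoF : Monotone F := fun x y hxy => by
    rw [hF, hF]; exact ENNReal.toReal_mono (hne _) (measure_mono (Iic_subset_Iic.2 hxy))
  have hmonoFm : Monotone Fm := fun x y hxy => by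
    rw [hFm, hFm]; exact ENNReal.toReal_mono (hne _) (measure_mono (Iio_subset_Iio hxy))
  have hcross : ∀ x y, x < y → F x ≤ Fm y := fun x y h => by
    rw [hF, hFm]; exact ENNReal.toReal_mono (hne _) (measure_mono (Iic_subset_Iio.2 h))
  have hmF : Measurable F := hmonoF.measurable
  have hmFm : Measurable Fm := hmonoFm.measurable
  have hofF : ∀ x, ENNReal.ofReal (F x) = μ (Iic x) := fun x => by
    rw [hF, ENNReal.ofReal_toReal (hne _)]
  have hofFm : ∀ x, ENNReal.ofReal (Fm x) = μ (Iio x) := fun x => by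
    rw [hFm, ENNReal.ofReal_toReal (hne _)]
  have hmeasA : ∀ x, MeasurableSet {v : ℝ | Fm x + v * (F x - Fm x) ≤ u} := fun x =>
    measurableSet_le (by fun_prop) measurable_const
  -- value of the inner measure in the three regimes
  have hg1 : ∀ x, F x ≤ u →
      (volume.restrict (Icc (0:ℝ) 1)) {v | Fm x + v * (F x - Fm x) ≤ u} = 1 := by
    intro x hx
    rw [Measure.restrict_apply (hmeasA x)]
    have hsub : Icc (0:ℝ) 1 ⊆ {v | Fm x + v * (F x - Fm x) ≤ u} := by
      intro v hv
      have h1 := hle x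
      simp only [mem_setOf_eq]
      nlinarith [hv.1, hv.2]
    rw [inter_eq_self_of_subset_right hsub]
    simp [Real.volume_Icc]
  have hg2 : ∀ x, Fm x < u → u < F x →
      (volume.restrict (Icc (0:ℝ) 1)) {v | Fm x + v * (F x - Fm x) ≤ u}
        = ENNReal.ofReal ((u - Fm x) / (F x - Fm x)) := by
    intro x h1 h2
    have hΔ : 0 < F x - Fm x := by linarith
    have hset : {v : ℝ | Fm x + v * (F x - Fm x) ≤ u} = Iic ((u - Fm x) / (F x - Fm x)) := by
      ext v
      simp only [mem_setOf_eq, mem_Iic]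
      rw [le_div_iff₀ hΔ]
      constructor <;> intro <;> linarith
    have ht0 : 0 ≤ (u - Fm x) / (F x - Fm x) := div_nonneg (by linarith) hΔ.le
    have ht1 : (u - Fm x) / (F x - Fm x) ≤ 1 := by rw [div_le_one hΔ]; linarith
    rw [hset, Measure.restrict_apply measurableSet_Iic]
    have hi : Iic ((u - Fm x) / (F x - Fm x)) ∩ Icc (0:ℝ) 1
        = Icc 0 ((u - Fm x) / (F x - Fm x)) := by
      ext v
      simp only [mem_inter_iff, mem_Iic, mem_Icc]
      constructor
      · rintro ⟨h, h0, _⟩; exact ⟨h0, h⟩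
      · rintro ⟨h0, h⟩; exact ⟨h, h0, h.trans ht1⟩
    rw [hi, Real.volume_Icc, sub_zero]
  have hg3 : ∀ x, u ≤ Fm x → u < F x →
      (volume.restrict (Icc (0:ℝ) 1)) {v | Fm x + v * (F x - Fm x) ≤ u} = 0 := by
    intro x h1 h2
    rw [Measure.restrict_apply (hmeasA x)]
    refine measure_mono_null (t := {0}) (fun v hv => ?_) Real.volume_singleton
    obtain ⟨hv1, hv0, hv2⟩ := hv
    simp only [mem_setOf_eq] at hv1
    have hΔ0 : 0 ≤ F x - Fm x := by linarith [hle x]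
    rcases eq_or_lt_of_le hΔ0 with hΔ | hΔ
    · exfalso
      have hz : F x - Fm x = 0 := hΔ.symm
      rw [hz, mul_zero, add_zero] at hv1
      linarith
    · have : v ≤ 0 := by nlinarith
      simp only [mem_singleton_iff]
      linarith
  -- decompose the integrand
  set S1 : Set ℝ := {x | F x ≤ u} with hS1def
  set S2 : Set ℝ := {x | Fm x < u ∧ u < F x} with hS2def
  have hS1m : MeasurableSet S1 := measurableSet_le hmF measurable_const
  have hS2m : MeasurableSet S2 :=
    (measurableSet_lt hmFm measurable_const).inter (measurableSet_lt measurable_const hmF)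
  have hgsplit : ∀ x, (volume.restrict (Icc (0:ℝ) 1)) {v | Fm x + v * (F x - Fm x) ≤ u}
      = S1.indicator (fun _ => 1) x
        + S2.indicator (fun x => ENNReal.ofReal ((u - Fm x) / (F x - Fm x))) x := by
    intro x
    by_cases h1 : F x ≤ u
    · have hx1 : x ∈ S1 := h1
      have hx2 : x ∉ S2 := fun h => absurd h1 (not_le.2 h.2)
      simp [Set.indicator_of_mem hx1, Set.indicator_of_notMem hx2, hg1 x h1]
    · push_neg at h1
      have hx1 : x ∉ S1 := not_le.2 h1
      by_cases h2 : Fm x < u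
      · have hx2 : x ∈ S2 := ⟨h2, h1⟩
        simp [Set.indicator_of_notMem hx1, Set.indicator_of_mem hx2, hg2 x h2 h1]
      · push_neg at h2
        have hx2 : x ∉ S2 := fun h => absurd h.1 (not_lt.2 h2)
        simp [Set.indicator_of_notMem hx1, Set.indicator_of_notMem hx2, hg3 x h2 h1]
  rw [lintegral_congr hgsplit]
  rw [lintegral_add_left (measurable_const.indicator hS1m)]
  rw [lintegral_indicator hS1m, lintegral_indicator hS2m, setLIntegral_one]
  -- S2 has at most one element
  have hsub : S2.Subsingleton := by
    intro x hx y hy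
    by_contra hne'
    rcases lt_or_gt_of_ne hne' with h | h
    · exact absurd (hcross x y h) (not_le.2 (hy.1.trans hx.2))
    · exact absurd (hcross y x h) (not_le.2 (hx.1.trans hy.2))
  have hkeyS2 : S2 = ∅ → ∀ x, u < F x → u ≤ Fm x := by
    intro he x hx
    by_contra h
    push_neg at h
    exact Set.eq_empty_iff_forall_notMem.1 he x ⟨h, hx⟩
  rcases hsub.eq_empty_or_singleton with he | ⟨a, ha⟩
  · -- no atom straddling u
    rw [he, Measure.restrict_empty, lintegral_zero_measure, add_zero]
    have hkey := hkeyS2 he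
    by_cases hS1e : S1.Nonempty
    · -- find a point strictly above u
      have hex : ∃ x0, u < F x0 := by
        have ht := tendsto_measure_Iic_atTop μ
        rw [measure_univ] at ht
        have hev : ∀ᶠ x : ℝ in atTop, ENNReal.ofReal u < μ (Iic x) :=
          ht.eventually (lt_mem_nhds (by exact_mod_cast ENNReal.ofReal_lt_one.2 hu1))
        obtain ⟨x, hx⟩ := hev.exists
        exact ⟨x, by rw [hF]; exact (ENNReal.ofReal_lt_iff_lt_toReal hu0 (hne _)).1 hx⟩
      obtain ⟨x0, hx0⟩ := hex
      have hbdd : BddAbove S1 := by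
        refine ⟨x0, fun y hy => ?_⟩
        by_contra h
        push_neg at h
        have := hmonoF h.le
        have hyu : F y ≤ u := hy
        linarith
      set s := sSup S1 with hs_def
      have hIio_sub : Iio s ⊆ S1 := by
        intro x hx
        obtain ⟨y, hyS, hxy⟩ := exists_lt_of_lt_csSup hS1e hx
        exact le_trans (hmonoF hxy.le) hyS
      have hsub_Iic : S1 ⊆ Iic s := fun x hx => le_csSup hbdd hx
      by_cases hs : s ∈ S1
      · have hS1eq : S1 = Iic s :=
          subset_antisymm hsub_Iic (fun x hx => (hmonoF hx).trans hs)
        rw [hS1eq]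
        refine le_antisymm ?_ ?_
        · rw [← hofF s]
          exact ENNReal.ofReal_le_ofReal hs
        · have hIeq : ⋂ n : ℕ, Iio (s + ((n:ℝ)+1)⁻¹) = Iic s := by
            ext x
            simp only [mem_iInter, mem_Iio, mem_Iic]
            constructor
            · intro h
              by_contra hc
              push_neg at hc
              obtain ⟨n, hn⟩ := exists_nat_one_div_lt (sub_pos.2 hc)
              have := h n
              rw [one_div] at hn
              linarith
            · intro h n
              have hpos : (0:ℝ) < ((n:ℝ)+1)⁻¹ := by positivity
              linarith
          have ht : Tendsto (fun n : ℕ => μ (Iio (s + ((n:ℝ)+1)⁻¹))) atTop (𝓝 (μ (Iic s))) := by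
            rw [← hIeq]
            exact tendsto_measure_iInter_atTop
              (fun n => measurableSet_Iio.nullMeasurableSet)
              (fun m n h => Iio_subset_Iio (by gcongr <;> exact_mod_cast h)) ⟨0, hne _⟩
          refine ge_of_tendsto' ht fun n => ?_
          have hpos : (0:ℝ) < ((n:ℝ)+1)⁻¹ := by positivity
          have hlt : u < F (s + ((n:ℝ)+1)⁻¹) := by
            by_contra hc
            push_neg at hc
            have hmem := hsub_Iic hc
            simp only [mem_Iic] at hmem
            linarith
          rw [← hofFm _]
          exact ENNReal.ofReal_le_ofReal (hkey _ hlt)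
      · have hS1eq : S1 = Iio s := by
          apply subset_antisymm
          · intro x hx
            have h1 : x ≤ s := hsub_Iic hx
            rcases lt_or_eq_of_le h1 with h | h
            · exact h
            · exact absurd (h ▸ hx) hs
          · exact hIio_sub
        rw [hS1eq]
        refine le_antisymm ?_ ?_
        · have hUeq : ⋃ n : ℕ, Iic (s - ((n:ℝ)+1)⁻¹) = Iio s := by
            ext x
            simp only [mem_iUnion, mem_Iic, mem_Iio]
            constructor
            · rintro ⟨n, hn⟩
              have hpos : (0:ℝ) < ((n:ℝ)+1)⁻¹ := by positivity
              linarith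
            · intro h
              obtain ⟨n, hn⟩ := exists_nat_one_div_lt (sub_pos.2 h)
              rw [one_div] at hn
              exact ⟨n, by linarith⟩
          have ht : Tendsto (fun n : ℕ => μ (Iic (s - ((n:ℝ)+1)⁻¹))) atTop (𝓝 (μ (Iio s))) := by
            rw [← hUeq]
            exact tendsto_measure_iUnion_atTop
              (fun m n h => Iic_subset_Iic.2 (by gcongr <;> exact_mod_cast h))
          refine le_of_tendsto' ht fun n => ?_
          have hpos : (0:ℝ) < ((n:ℝ)+1)⁻¹ := by positivity
          have hmem : s - ((n:ℝ)+1)⁻¹ ∈ S1 := hIio_sub (by simp only [mem_Iio]; linarith)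
          rw [← hofF _]
          exact ENNReal.ofReal_le_ofReal hmem
        · have hlt : u < F s := not_le.1 hs
          rw [← hofFm s]
          exact ENNReal.ofReal_le_ofReal (hkey s hlt)
    · -- S1 empty: u must be 0
      rw [not_nonempty_iff_eq_empty] at hS1e
      have hall : ∀ x : ℝ, ENNReal.ofReal u ≤ μ (Iio x) := by
        intro x
        have hx : u < F x := not_le.1 (Set.eq_empty_iff_forall_notMem.1 hS1e x)
        rw [← hofFm x]
        exact ENNReal.ofReal_le_ofReal (hkey x hx)
      have hIe : ⋂ n : ℕ, Iio (-(n:ℝ)) = ∅ := by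
        ext x
        simp only [mem_iInter, mem_Iio, mem_empty_iff_false, iff_false, not_forall, not_lt]
        obtain ⟨n, hn⟩ := exists_nat_gt (-x)
        exact ⟨n, by linarith⟩
      have ht : Tendsto (fun n : ℕ => μ (Iio (-(n:ℝ)))) atTop (𝓝 (μ (⋂ n : ℕ, Iio (-(n:ℝ))))) :=
        tendsto_measure_iInter_atTop (fun n => measurableSet_Iio.nullMeasurableSet)
          (fun m n h => Iio_subset_Iio (by simp; exact_mod_cast h)) ⟨0, hne _⟩
      rw [hIe, measure_empty] at ht
      have hu_le : ENNReal.ofReal u ≤ 0 := ge_of_tendsto' ht fun n => hall _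
      rw [hS1e, measure_empty]
      exact (le_antisymm hu_le zero_le).symm
  · -- one atom straddling u
    have haS : Fm a < u ∧ u < F a := by
      have : a ∈ S2 := ha ▸ mem_singleton a
      exact this
    have hΔ : 0 < F a - Fm a := by linarith [haS.1, haS.2]
    have hS1eq : S1 = Iio a := by
      ext x
      simp only [hS1def, mem_setOf_eq, mem_Iio]
      constructor
      · intro hx
        by_contra hax
        push_neg at hax
        have := hmonoF hax
        linarith [haS.2]
      · intro hx
        linarith [hcross x a hx, haS.1]
    have hsum : μ (Iio a) + μ {a} = μ (Iic a) := by
      rw [← measure_union (by simp) (measurableSet_singleton a), Iio_union_right]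
    have hatom : μ {a} = ENNReal.ofReal (F a - Fm a) := by
      have h1 : μ {a} = ENNReal.ofReal (F a) - ENNReal.ofReal (Fm a) := by
        rw [hofF, hofFm, ← hsum, ENNReal.add_sub_cancel_left (hne _)]
      rw [h1, ← ENNReal.ofReal_sub _ (hFm0 a)]
    rw [ha, lintegral_singleton, hS1eq, hatom, ← hofFm a,
      ← ENNReal.ofReal_mul (div_nonneg (by linarith [haS.1]) hΔ.le),
      div_mul_cancel₀ _ (ne_of_gt hΔ),
      ← ENNReal.ofReal_add (hFm0 a) (by linarith [haS.1])]
    congr 1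
    ring

theorem stmt0 {Ω : Type*} [MeasurableSpace Ω] (P : Measure Ω) [IsProbabilityMeasure P]
    (X V : Ω → ℝ) (hXm : Measurable X) (hVm : Measurable V)
    (hV : Measure.map V P = volume.restrict (Set.Icc (0:ℝ) 1))
    (hindep : IndepFun X V P)
    (F Fm : ℝ → ℝ)
    (hF : ∀ x, F x = (P {ω | X ω ≤ x}).toReal)
    (hFm : ∀ x, Fm x = (P {ω | X ω < x}).toReal)
    (U : Ω → ℝ)
    (hU : ∀ ω, U ω = Fm (X ω) + V ω * (F (X ω) - Fm (X ω))) :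
    Measure.map U P = volume.restrict (Set.Icc (0:ℝ) 1) := by
  have hXae : AEMeasurable X P := hXm.aemeasurable
  set μ : Measure ℝ := P.map X with hμdef
  haveI : IsProbabilityMeasure μ := Measure.isProbabilityMeasure_map hXae
  have hμIic : ∀ x, μ (Set.Iic x) = P {ω | X ω ≤ x} := fun x => by
    rw [hμdef, Measure.map_apply hXm measurableSet_Iic]; rfl
  have hμIio : ∀ x, μ (Set.Iio x) = P {ω | X ω < x} := fun x => by
    rw [hμdef, Measure.map_apply hXm measurableSet_Iio]; rfl
  have hF' : ∀ x, F x = (μ (Set.Iic x)).toReal := fun x => by rw [hF, hμIic]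
  have hFm' : ∀ x, Fm x = (μ (Set.Iio x)).toReal := fun x => by rw [hFm, hμIio]
  have hmonoF : Monotone F := fun x y h => by
    rw [hF', hF']
    exact ENNReal.toReal_mono (measure_ne_top μ _) (measure_mono (Set.Iic_subset_Iic.2 h))
  have hmonoFm : Monotone Fm := fun x y h => by
    rw [hFm', hFm']
    exact ENNReal.toReal_mono (measure_ne_top μ _) (measure_mono (Set.Iio_subset_Iio h))
  have hmF : Measurable F := hmonoF.measurable
  have hmFm : Measurable Fm := hmonoFm.measurable
  have hle : ∀ x, Fm x ≤ F x := fun x => by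
    rw [hF', hFm']
    exact ENNReal.toReal_mono (measure_ne_top μ _) (measure_mono Set.Iio_subset_Iic_self)
  have hFm0 : ∀ x, 0 ≤ Fm x := fun x => by rw [hFm']; exact ENNReal.toReal_nonneg
  have hF1 : ∀ x, F x ≤ 1 := fun x => by
    rw [hF']
    have := ENNReal.toReal_mono (measure_ne_top μ Set.univ)
      (measure_mono (Set.subset_univ (Set.Iic x)))
    simpa using this
  have hUeq : U = fun ω => Fm (X ω) + V ω * (F (X ω) - Fm (X ω)) := funext hU
  have hUm : Measurable U := by
    rw [hUeq]
    exact (hmFm.comp hXm).add (hVm.mul ((hmF.comp hXm).sub (hmFm.comp hXm)))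
  haveI : IsProbabilityMeasure (P.map U) := Measure.isProbabilityMeasure_map hUm.aemeasurable
  have hVset : P (V ⁻¹' Set.Icc (0:ℝ) 1)ᶜ = 0 := by
    have h1 : P (V ⁻¹' (Set.Icc (0:ℝ) 1)ᶜ) = 0 := by
      rw [← Measure.map_apply hVm measurableSet_Icc.compl, hV,
        Measure.restrict_apply measurableSet_Icc.compl]
      simp
    simpa [Set.preimage_compl] using h1
  refine Measure.ext_of_Iic (P.map U) _ (fun a => ?_)
  rw [Measure.map_apply hUm measurableSet_Iic,
    Measure.restrict_apply measurableSet_Iic]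
  rcases lt_or_ge a 0 with ha | ha
  · have hrhs : Set.Iic a ∩ Set.Icc (0:ℝ) 1 = ∅ := by
      ext v
      simp only [Set.mem_inter_iff, Set.mem_Iic, Set.mem_Icc, Set.mem_empty_iff_false, iff_false,
        not_and]
      intro h1 h2
      intro h3
      linarith
    rw [hrhs, measure_empty]
    refine measure_mono_null (fun ω hω => ?_) hVset
    simp only [Set.mem_preimage, Set.mem_Iic] at hω
    simp only [Set.mem_compl_iff, Set.mem_preimage, Set.mem_Icc, not_and_or, not_le]
    by_contra hc
    push_neg at hc
    obtain ⟨h0, h1'⟩ := hc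
    have hval := hU ω
    have hmul : 0 ≤ V ω * (F (X ω) - Fm (X ω)) :=
      mul_nonneg h0 (sub_nonneg.2 (hle (X ω)))
    have := hFm0 (X ω)
    linarith
  rcases lt_or_ge a 1 with ha1 | ha1
  · have hrhs : Set.Iic a ∩ Set.Icc (0:ℝ) 1 = Set.Icc 0 a := by
      ext v
      simp only [Set.mem_inter_iff, Set.mem_Iic, Set.mem_Icc]
      constructor
      · rintro ⟨h1, h2, _⟩; exact ⟨h2, h1⟩
      · rintro ⟨h1, h2⟩; exact ⟨h2, h1, by linarith⟩
    rw [hrhs, Real.volume_Icc, sub_zero]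
    have hjoint : P.map (fun ω => (X ω, V ω)) = μ.prod (volume.restrict (Set.Icc (0:ℝ) 1)) := by
      rw [← hV]
      exact (indepFun_iff_map_prod_eq_prod_map_map hXm.aemeasurable hVm.aemeasurable).1 hindep
    have hAm : MeasurableSet {p : ℝ × ℝ | Fm p.1 + p.2 * (F p.1 - Fm p.1) ≤ a} :=
      measurableSet_le ((hmFm.comp measurable_fst).add
        (measurable_snd.mul ((hmF.comp measurable_fst).sub (hmFm.comp measurable_fst))))
        measurable_const
    have hpre : U ⁻¹' Set.Iic a
        = (fun ω => (X ω, V ω)) ⁻¹' {p : ℝ × ℝ | Fm p.1 + p.2 * (F p.1 - Fm p.1) ≤ a} := by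
      ext ω
      simp [hU ω]
    rw [hpre, ← Measure.map_apply (hXm.prodMk hVm) hAm, hjoint, Measure.prod_apply hAm]
    exact uniform_slice μ F Fm hF' hFm' ha ha1
  · have hrhs : Set.Iic a ∩ Set.Icc (0:ℝ) 1 = Set.Icc 0 1 := by
      ext v
      simp only [Set.mem_inter_iff, Set.mem_Iic, Set.mem_Icc]
      constructor
      · rintro ⟨h1, h2, h3⟩; exact ⟨h2, h3⟩
      · rintro ⟨h1, h2⟩; exact ⟨by linarith, h1, h2⟩
    rw [hrhs, Real.volume_Icc]
    have hcompl : P (U ⁻¹' Set.Iic a)ᶜ = 0 := by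
      refine measure_mono_null (fun ω hω => ?_) hVset
      simp only [Set.mem_compl_iff, Set.mem_preimage, Set.mem_Iic, not_le] at hω
      simp only [Set.mem_compl_iff, Set.mem_preimage, Set.mem_Icc, not_and_or, not_le]
      by_contra hc
      push_neg at hc
      obtain ⟨h0, h1'⟩ := hc
      have hval := hU ω
      have hmul : V ω * (F (X ω) - Fm (X ω)) ≤ F (X ω) - Fm (X ω) := by
        nlinarith [sub_nonneg.2 (hle (X ω))]
      have := hF1 (X ω)
      linarith
    rw [(prob_compl_eq_zero_iff (hUm measurableSet_Iic)).1 hcompl]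
    norm_num
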